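/- Let s ∈ R, let χ be a Schwartz function on R^d with L^2 norm 1, and define Tf(y,η) = ⟨f, χ_{y,η}⟩ for f Schwartz, where χ_{y,η}(x) = χ(x−y)e^{2πi η·x}. Then for every Schwartz f, the quantity ‖f‖_{S^{−s}} := ∫_{R^d×R^d} |Tf(y,η)| ⟨y⟩^{−s} ⟨η⟩^{−s} dy dη is finite, and moreover for each fixed (y_0, η_0), ‖χ_{y_0,η_0}‖_{S^{−s}} ≤ C(s) ⟨y_0⟩^{−s} ⟨η_0⟩^{−s}. -/

import Mathlib

open MeasureTheory

noncomputable def jb {d : ℕ} (x : EuclideanSpace ℝ (Fin d)) : ℝ := Real.sqrt (1 + ‖x‖ ^ 2)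

/-- The Gabor transform `Tf(y,η) = ⟨f, χ_{y,η}⟩`. -/
noncomputable def gaborT {d : ℕ} (χ f : SchwartzMap (EuclideanSpace ℝ (Fin d)) ℂ)
    (y η : EuclideanSpace ℝ (Fin d)) : ℂ :=
  ∫ x : EuclideanSpace ℝ (Fin d),
    f x * (starRingEnd ℂ) (χ (x - y) * Complex.exp (2 * Real.pi * Complex.I * ((inner ℝ η x : ℝ) : ℂ)))

namespace GaborAux

open SchwartzMap Real FourierTransform Finset

variable {d : ℕ}

/-! ### Basic facts about the Japanese bracket `jb` -/

lemma jb_nonneg (x : EuclideanSpace ℝ (Fin d)) : 0 ≤ jb x := Real.sqrt_nonneg _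

lemma one_le_jb (x : EuclideanSpace ℝ (Fin d)) : 1 ≤ jb x := by
  have h := Real.sqrt_le_sqrt (show (1:ℝ) ≤ 1 + ‖x‖ ^ 2 by nlinarith [sq_nonneg ‖x‖])
  rwa [Real.sqrt_one] at h

lemma jb_pos (x : EuclideanSpace ℝ (Fin d)) : 0 < jb x :=
  lt_of_lt_of_le one_pos (one_le_jb x)

lemma norm_le_jb (x : EuclideanSpace ℝ (Fin d)) : ‖x‖ ≤ jb x := by
  have h := Real.sqrt_le_sqrt (show ‖x‖ ^ 2 ≤ 1 + ‖x‖ ^ 2 by linarith)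
  rwa [Real.sqrt_sq (norm_nonneg x)] at h

lemma jb_le_one_add (x : EuclideanSpace ℝ (Fin d)) : jb x ≤ 1 + ‖x‖ := by
  rw [jb]
  calc Real.sqrt (1 + ‖x‖ ^ 2) ≤ Real.sqrt ((1 + ‖x‖) ^ 2) :=
        Real.sqrt_le_sqrt (by nlinarith [norm_nonneg x])
    _ = 1 + ‖x‖ := Real.sqrt_sq (by positivity)

lemma continuous_jb : Continuous (jb (d := d)) := by
  unfold jb
  exact (continuous_const.add (continuous_norm.pow 2)).sqrt

lemma jb_neg (x : EuclideanSpace ℝ (Fin d)) : jb (-x) = jb x := by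
  simp [jb]

lemma jb_sub_rev (x y : EuclideanSpace ℝ (Fin d)) : jb (x - y) = jb (y - x) := by
  rw [← jb_neg (x - y)]; congr 1; abel

/-- Peetre-type inequality: `⟨y⟩ ≤ (1+‖x‖)(1+‖x-y‖)`. -/
lemma jb_le_one_add_mul (x y : EuclideanSpace ℝ (Fin d)) :
    jb y ≤ (1 + ‖x‖) * (1 + ‖x - y‖) := by
  have h1 : ‖y‖ ≤ ‖x‖ + ‖x - y‖ := by
    calc ‖y‖ = ‖x - (x - y)‖ := by congr 1; abel
      _ ≤ ‖x‖ + ‖x - y‖ := norm_sub_le _ _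
  nlinarith [jb_le_one_add y, norm_nonneg x, norm_nonneg (x - y), norm_nonneg y]

lemma one_add_norm_le_two_jb (x : EuclideanSpace ℝ (Fin d)) : 1 + ‖x‖ ≤ 2 * jb x := by
  nlinarith [one_le_jb x, norm_le_jb x]

/-- Peetre-type inequality with bracket on the right. -/
lemma jb_le_four_mul (y z : EuclideanSpace ℝ (Fin d)) :
    jb y ≤ (4 * jb (y - z)) * jb z := by
  calc jb y ≤ (1 + ‖z‖) * (1 + ‖z - y‖) := jb_le_one_add_mul z y
    _ ≤ (2 * jb z) * (2 * jb (z - y)) := by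
        have h1 := one_add_norm_le_two_jb z
        have h2 := one_add_norm_le_two_jb (z - y)
        have h3 : (0:ℝ) ≤ 1 + ‖z‖ := by positivity
        have h4 : (0:ℝ) ≤ 1 + ‖z - y‖ := by positivity
        nlinarith [jb_nonneg z, jb_nonneg (z - y)]
    _ = (4 * jb (z - y)) * jb z := by ring
    _ = (4 * jb (y - z)) * jb z := by rw [jb_sub_rev]

lemma jb_rpow_natCast_inv (x : EuclideanSpace ℝ (Fin d)) (N : ℕ) :
    jb x ^ (-(N:ℝ)) = (jb x ^ N)⁻¹ := by
  rw [Real.rpow_neg (jb_nonneg x), Real.rpow_natCast]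

/-- The key weighted Peetre inequality for real powers. -/
lemma jb_rpow_peetre (s : ℝ) (y z : EuclideanSpace ℝ (Fin d)) :
    jb y ^ (-s) ≤ (4 * jb (y - z)) ^ |s| * jb z ^ (-s) := by
  have h4 : (0:ℝ) < 4 * jb (y - z) := by have := jb_pos (y - z); linarith
  rcases le_or_gt 0 s with hs | hs
  · -- s ≥ 0 : use ⟨z⟩ ≤ 4⟨z-y⟩⟨y⟩
    have h1 : jb z ≤ (4 * jb (y - z)) * jb y := by
      have := jb_le_four_mul z y
      rwa [jb_sub_rev z y] at this
    have h2 : jb z ^ s ≤ ((4 * jb (y - z)) * jb y) ^ s :=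
      Real.rpow_le_rpow (jb_nonneg z) h1 hs
    rw [Real.mul_rpow h4.le (jb_nonneg y)] at h2
    rw [abs_of_nonneg hs]
    rw [Real.rpow_neg (jb_nonneg y), Real.rpow_neg (jb_nonneg z)]
    have hy : (0:ℝ) < jb y ^ s := Real.rpow_pos_of_pos (jb_pos y) s
    have hz : (0:ℝ) < jb z ^ s := Real.rpow_pos_of_pos (jb_pos z) s
    have h4s : (0:ℝ) < (4 * jb (y - z)) ^ s := Real.rpow_pos_of_pos h4 s
    have key : (jb y ^ s)⁻¹ * (jb z ^ s) ≤ (4 * jb (y - z)) ^ s := by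
      rw [inv_mul_le_iff₀ hy]
      calc jb z ^ s ≤ (4 * jb (y - z)) ^ s * jb y ^ s := h2
        _ = jb y ^ s * (4 * jb (y - z)) ^ s := by ring
    calc (jb y ^ s)⁻¹ = ((jb y ^ s)⁻¹ * jb z ^ s) * (jb z ^ s)⁻¹ := by
          rw [mul_assoc, mul_inv_cancel₀ hz.ne', mul_one]
      _ ≤ (4 * jb (y - z)) ^ s * (jb z ^ s)⁻¹ := by
          apply mul_le_mul_of_nonneg_right key (by positivity)
  · -- s < 0
    have h1 : jb y ≤ (4 * jb (y - z)) * jb z := jb_le_four_mul y z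
    have h2 : jb y ^ (-s) ≤ ((4 * jb (y - z)) * jb z) ^ (-s) :=
      Real.rpow_le_rpow (jb_nonneg y) h1 (by linarith)
    rw [Real.mul_rpow h4.le (jb_nonneg z)] at h2
    rwa [abs_of_neg hs]

lemma jb_rpow_le_of_exponent_le (x : EuclideanSpace ℝ (Fin d)) {a b : ℝ} (h : a ≤ b) :
    jb x ^ a ≤ jb x ^ b :=
  Real.rpow_le_rpow_of_exponent_le (one_le_jb x) h

/-- Integrability of negative powers of the bracket. -/
lemma integrable_jb_rpow {t : ℝ} (ht : (d:ℝ) < t) :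
    Integrable (fun x : EuclideanSpace ℝ (Fin d) => jb x ^ (-t)) := by
  have h : (Module.finrank ℝ (EuclideanSpace ℝ (Fin d)) : ℝ) < t := by
    rwa [finrank_euclideanSpace_fin]
  have := integrable_rpow_neg_one_add_norm_sq (E := EuclideanSpace ℝ (Fin d))
    (μ := volume) h
  apply this.congr
  filter_upwards with x
  rw [jb, Real.sqrt_eq_rpow, ← Real.rpow_mul (by positivity : (0:ℝ) ≤ 1 + ‖x‖ ^ 2)]
  congr 1
  ring

/-! ### Translation invariance of iterated derivatives -/

lemma iteratedFDeriv_comp_sub {F : Type*} [NormedAddCommGroup F] [NormedSpace ℝ F]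
    {h : EuclideanSpace ℝ (Fin d) → F} (hh : ContDiff ℝ (⊤ : ℕ∞) h)
    (y : EuclideanSpace ℝ (Fin d)) (n : ℕ) :
    iteratedFDeriv ℝ n (fun z => h (z - y))
      = fun x => iteratedFDeriv ℝ n h (x - y) := by
  induction n with
  | zero =>
    funext x
    ext m
    simp [iteratedFDeriv_zero_apply]
  | succ n ih =>
    funext x
    ext m
    rw [iteratedFDeriv_succ_apply_left, iteratedFDeriv_succ_apply_left]
    have hd : Differentiable ℝ (iteratedFDeriv ℝ n h) :=
      hh.differentiable_iteratedFDeriv (by exact_mod_cast ENat.coe_lt_top (n : ℕ))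
    have h2 : HasFDerivAt (fun z => iteratedFDeriv ℝ n h (z - y))
        (fderiv ℝ (iteratedFDeriv ℝ n h) (x - y)) x := by
      have := ((hd (x - y)).hasFDerivAt).comp x ((hasFDerivAt_id x).sub_const y)
      exact this
    rw [ih, h2.fderiv]

/-! ### The key uniform seminorm bound for the windowed product -/

lemma smooth_window (χ : SchwartzMap (EuclideanSpace ℝ (Fin d)) ℂ) (y : EuclideanSpace ℝ (Fin d)) :
    ContDiff ℝ (⊤ : ℕ∞) (fun z : EuclideanSpace ℝ (Fin d) => (starRingEnd ℂ) (χ (z - y))) := by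
  have h1 : ContDiff ℝ (⊤ : ℕ∞) (fun z : EuclideanSpace ℝ (Fin d) => χ (z - y)) :=
    (χ.smooth ⊤).comp (contDiff_id.sub contDiff_const)
  exact Complex.conjCLE.contDiff.comp h1

lemma key_bound (f χ : SchwartzMap (EuclideanSpace ℝ (Fin d)) ℂ) (k n N : ℕ) :
    ∃ C, 0 ≤ C ∧ ∀ (y x : EuclideanSpace ℝ (Fin d)),
      jb y ^ N * ((1 + ‖x‖) ^ k *
        ‖iteratedFDeriv ℝ n (fun z => f z * (starRingEnd ℂ) (χ (z - y))) x‖) ≤ C := by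
  set Cf : ℝ := 2 ^ (N + k) * (Finset.Iic (N + k, n)).sup
    (fun m => SchwartzMap.seminorm ℝ m.1 m.2) f with hCfdef
  set Cχ : ℝ := 2 ^ N * (Finset.Iic (N, n)).sup
    (fun m => SchwartzMap.seminorm ℝ m.1 m.2) χ with hCχdef
  have hCf0 : 0 ≤ Cf := mul_nonneg (by positivity) (apply_nonneg _ _)
  have hCχ0 : 0 ≤ Cχ := mul_nonneg (by positivity) (apply_nonneg _ _)
  refine ⟨(2:ℝ) ^ n * (Cf * Cχ), by positivity, fun y x => ?_⟩
  have hconj : ∀ j : ℕ,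
      ‖iteratedFDeriv ℝ j (fun z => (starRingEnd ℂ) (χ (z - y))) x‖
        = ‖iteratedFDeriv ℝ j (⇑χ) (x - y)‖ := by
    intro j
    have e1 : (fun z : EuclideanSpace ℝ (Fin d) => (starRingEnd ℂ) (χ (z - y)))
        = (⇑Complex.conjLIE) ∘ (fun z : EuclideanSpace ℝ (Fin d) => χ (z - y)) := rfl
    rw [e1, Complex.conjLIE.norm_iteratedFDeriv_comp_left,
      iteratedFDeriv_comp_sub (χ.smooth ⊤) y j]
  have hL : ‖iteratedFDeriv ℝ n (fun z => f z * (starRingEnd ℂ) (χ (z - y))) x‖ ≤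
      ∑ i ∈ Finset.range (n+1), (n.choose i : ℝ) * ‖iteratedFDeriv ℝ i (⇑f) x‖ *
        ‖iteratedFDeriv ℝ (n-i) (⇑χ) (x - y)‖ := by
    refine (norm_iteratedFDeriv_mul_le (f.smooth ⊤) (smooth_window χ y) x
      (by exact_mod_cast le_top)).trans (le_of_eq ?_)
    exact Finset.sum_congr rfl fun i _ => by rw [hconj]
  have hjb : jb y ^ N ≤ (1 + ‖x‖) ^ N * (1 + ‖x - y‖) ^ N := by
    rw [← mul_pow]
    exact pow_le_pow_left₀ (jb_nonneg y) (jb_le_one_add_mul x y) N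
  have hsum : ((1 + ‖x‖) ^ N * (1 + ‖x - y‖) ^ N) * ((1 + ‖x‖) ^ k *
      (∑ i ∈ Finset.range (n+1), (n.choose i : ℝ) * ‖iteratedFDeriv ℝ i (⇑f) x‖ *
        ‖iteratedFDeriv ℝ (n-i) (⇑χ) (x - y)‖)) =
      ∑ i ∈ Finset.range (n+1), (n.choose i : ℝ) *
        ((1 + ‖x‖) ^ (N + k) * ‖iteratedFDeriv ℝ i (⇑f) x‖) *
        ((1 + ‖x - y‖) ^ N * ‖iteratedFDeriv ℝ (n-i) (⇑χ) (x - y)‖) := by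
    rw [Finset.mul_sum, Finset.mul_sum]
    exact Finset.sum_congr rfl fun i _ => by rw [pow_add]; ring
  calc jb y ^ N * ((1 + ‖x‖) ^ k *
        ‖iteratedFDeriv ℝ n (fun z => f z * (starRingEnd ℂ) (χ (z - y))) x‖)
      ≤ ((1 + ‖x‖) ^ N * (1 + ‖x - y‖) ^ N) * ((1 + ‖x‖) ^ k *
        (∑ i ∈ Finset.range (n+1), (n.choose i : ℝ) * ‖iteratedFDeriv ℝ i (⇑f) x‖ *
          ‖iteratedFDeriv ℝ (n-i) (⇑χ) (x - y)‖)) := by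
        apply mul_le_mul hjb (mul_le_mul_of_nonneg_left hL (by positivity))
          (by positivity) (by positivity)
    _ = ∑ i ∈ Finset.range (n+1), (n.choose i : ℝ) *
          ((1 + ‖x‖) ^ (N + k) * ‖iteratedFDeriv ℝ i (⇑f) x‖) *
          ((1 + ‖x - y‖) ^ N * ‖iteratedFDeriv ℝ (n-i) (⇑χ) (x - y)‖) := hsum
    _ ≤ ∑ i ∈ Finset.range (n+1), (n.choose i : ℝ) * Cf * Cχ := by
        apply Finset.sum_le_sum
        intro i hi
        have hif : i ≤ n := Nat.lt_succ_iff.mp (Finset.mem_range.mp hi)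
        have hu := one_add_le_sup_seminorm_apply (𝕜 := ℝ) (m := (N + k, n))
          (le_refl (N + k)) hif f x
        have hv := one_add_le_sup_seminorm_apply (𝕜 := ℝ) (m := (N, n))
          (le_refl N) (Nat.sub_le n i) χ (x - y)
        have h1 : (1 + ‖x‖) ^ (N + k) * ‖iteratedFDeriv ℝ i (⇑f) x‖ ≤ Cf := hu
        have h2 : (1 + ‖x - y‖) ^ N * ‖iteratedFDeriv ℝ (n-i) (⇑χ) (x - y)‖ ≤ Cχ := hv
        have hn1 : (0:ℝ) ≤ (n.choose i : ℝ) := by positivity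
        apply mul_le_mul (mul_le_mul_of_nonneg_left h1 hn1) h2 (by positivity)
          (by positivity)
    _ = (2:ℝ) ^ n * (Cf * Cχ) := by
        rw [← Finset.sum_mul, ← Finset.sum_mul]
        have : (∑ i ∈ Finset.range (n+1), (n.choose i : ℝ)) = (2:ℝ) ^ n := by
          rw [← Nat.cast_sum]
          norm_cast
          exact Nat.sum_range_choose n
        rw [this]; ring

/-! ### Identification with the Fourier transform -/

lemma gaborT_eq (χ f : SchwartzMap (EuclideanSpace ℝ (Fin d)) ℂ)
    (y η : EuclideanSpace ℝ (Fin d)) :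
    gaborT χ f y η
      = 𝓕 (fun x => f x * (starRingEnd ℂ) (χ (x - y))) η := by
  rw [Real.fourier_eq']
  unfold gaborT
  congr 1
  funext x
  rw [smul_eq_mul, map_mul]
  rw [← Complex.exp_conj]
  have hc : (starRingEnd ℂ) (2 * (Real.pi : ℂ) * Complex.I * ((inner ℝ η x : ℝ) : ℂ))
      = ((-2 * Real.pi * (inner ℝ x η : ℝ) : ℝ) : ℂ) * Complex.I := by
    rw [real_inner_comm x η]
    push_cast
    simp only [map_mul, Complex.conj_I, Complex.conj_ofReal]
    rw [show (starRingEnd ℂ) 2 = 2 from map_ofNat _ 2]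
    ring
  rw [hc]
  ring

/-! ### The core decay estimate -/

lemma gaborT_decay (χ f : SchwartzMap (EuclideanSpace ℝ (Fin d)) ℂ) (N : ℕ) :
    ∃ C, 0 ≤ C ∧ ∀ y η : EuclideanSpace ℝ (Fin d),
      jb y ^ N * (jb η ^ N * ‖gaborT χ f y η‖) ≤ C := by
  classical
  set g : EuclideanSpace ℝ (Fin d) → EuclideanSpace ℝ (Fin d) → ℂ :=
    fun y z => f z * (starRingEnd ℂ) (χ (z - y)) with hgdef
  have key' : ∀ n : ℕ, ∃ C, 0 ≤ C ∧ ∀ (y x : EuclideanSpace ℝ (Fin d)),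
      jb y ^ N * ((1 + ‖x‖) ^ (d+1) * ‖iteratedFDeriv ℝ n (g y) x‖) ≤ C :=
    fun n => key_bound f χ (d+1) n N
  choose Cn hCn0 hCn using key'
  set I : ℝ := ∫ v : EuclideanSpace ℝ (Fin d), (1 + ‖v‖) ^ (-((d:ℝ)+1)) with hIdef
  have hInt : Integrable (fun v : EuclideanSpace ℝ (Fin d) => (1 + ‖v‖) ^ (-((d:ℝ)+1))) := by
    apply integrable_one_add_norm
    rw [finrank_euclideanSpace_fin]
    linarith
  have hIpos : 0 ≤ I := integral_nonneg fun v => Real.rpow_nonneg (by positivity) _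
  have hgy : ∀ y, ContDiff ℝ (⊤ : ℕ∞) (g y) :=
    fun y => (f.smooth ⊤).mul (smooth_window χ y)
  -- pointwise bound on the derivatives of g y
  have hpoint : ∀ (n : ℕ) (y x : EuclideanSpace ℝ (Fin d)),
      ‖iteratedFDeriv ℝ n (g y) x‖ ≤ (Cn n * (jb y ^ N)⁻¹) * (1 + ‖x‖) ^ (-((d:ℝ)+1)) := by
    intro n y x
    have hA : (0:ℝ) < jb y ^ N := pow_pos (jb_pos y) N
    have hB : (0:ℝ) < (1 + ‖x‖) ^ (d+1) := by positivity
    have h3 : ‖iteratedFDeriv ℝ n (g y) x‖ * (jb y ^ N * (1 + ‖x‖) ^ (d+1)) ≤ Cn n := by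
      calc ‖iteratedFDeriv ℝ n (g y) x‖ * (jb y ^ N * (1 + ‖x‖) ^ (d+1))
          = jb y ^ N * ((1 + ‖x‖) ^ (d+1) * ‖iteratedFDeriv ℝ n (g y) x‖) := by ring
        _ ≤ Cn n := hCn n y x
    have h4 : ‖iteratedFDeriv ℝ n (g y) x‖ ≤ Cn n / (jb y ^ N * (1 + ‖x‖) ^ (d+1)) :=
      (le_div_iff₀ (mul_pos hA hB)).mpr h3
    have h5 : (1 + ‖x‖) ^ (-((d:ℝ)+1)) = ((1 + ‖x‖) ^ (d+1) : ℝ)⁻¹ := by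
      rw [show -((d:ℝ)+1) = -(((d+1 : ℕ)):ℝ) by push_cast; ring,
        Real.rpow_neg (by positivity), Real.rpow_natCast]
    rw [h5]
    calc ‖iteratedFDeriv ℝ n (g y) x‖ ≤ Cn n / (jb y ^ N * (1 + ‖x‖) ^ (d+1)) := h4
      _ = (Cn n * (jb y ^ N)⁻¹) * ((1 + ‖x‖) ^ (d+1) : ℝ)⁻¹ := by
          rw [div_eq_mul_inv, mul_inv]; ring
  -- integrability of the derivatives of g y
  have hInt2 : ∀ (n : ℕ) (y : EuclideanSpace ℝ (Fin d)),
      Integrable (fun v => ‖iteratedFDeriv ℝ n (g y) v‖) := by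
    intro n y
    refine (hInt.const_mul (Cn n * (jb y ^ N)⁻¹)).mono'
      (((hgy y).continuous_iteratedFDeriv (by exact_mod_cast le_top)).norm.aestronglyMeasurable) ?_
    filter_upwards with v
    rw [norm_norm]
    exact hpoint n y v
  -- integral bound
  have hJ : ∀ (n : ℕ) (y : EuclideanSpace ℝ (Fin d)),
      (∫ v, ‖iteratedFDeriv ℝ n (g y) v‖) ≤ (Cn n * (jb y ^ N)⁻¹) * I := by
    intro n y
    calc (∫ v, ‖iteratedFDeriv ℝ n (g y) v‖)
        ≤ ∫ v, (Cn n * (jb y ^ N)⁻¹) * (1 + ‖v‖) ^ (-((d:ℝ)+1)) :=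
          integral_mono (hInt2 n y) (hInt.const_mul _) (fun v => hpoint n y v)
      _ = (Cn n * (jb y ^ N)⁻¹) * I := by rw [integral_const_mul]
  set S : ℝ := ∑ p ∈ Finset.range (0+1) ×ˢ Finset.range (N+1), Cn p.2 with hSdef
  have hS0 : 0 ≤ S := Finset.sum_nonneg fun p _ => hCn0 p.2
  refine ⟨2^N * (Cn 0 * I + 2^N * (S * I)),
    mul_nonneg (by positivity) (add_nonneg (mul_nonneg (hCn0 0) hIpos)
      (mul_nonneg (by positivity) (mul_nonneg hS0 hIpos))), fun y η => ?_⟩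
  set A : ℝ := jb y ^ N with hAdef
  have hA : (0:ℝ) < A := pow_pos (jb_pos y) N
  have hFT : gaborT χ f y η = 𝓕 (g y) η := gaborT_eq χ f y η
  -- integrability hypothesis for the Fourier bound
  have h'f : ∀ (k n : ℕ), (k:ℕ∞) ≤ (0:ℕ∞) → (n:ℕ∞) ≤ (N:ℕ∞) →
      Integrable (fun v => ‖v‖^k * ‖iteratedFDeriv ℝ n (g y) v‖) := by
    intro k n hk hn
    have hk0 : k = 0 := by exact_mod_cast Nat.le_zero.mp (by exact_mod_cast hk)
    subst hk0
    simpa using hInt2 n y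
  have hpow := Real.pow_mul_norm_iteratedFDeriv_fourier_le (K := (0:ℕ∞))
    (N := (N:ℕ∞)) ((hgy y).of_le (by exact_mod_cast le_top)) h'f (le_refl (0:ℕ∞))
    (le_refl ((N:ℕ∞))) η
  simp only [pow_zero, one_mul, norm_iteratedFDeriv_zero, Nat.cast_zero, mul_zero, zero_add] at hpow
  -- hpow : ‖η‖ ^ N * ‖𝓕 (g y) η‖ ≤ 2 ^ N * ∑ ...
  have hsumle : (∑ p ∈ Finset.range (0+1) ×ˢ Finset.range (N+1),
      ∫ v, ‖v‖ ^ p.1 * ‖iteratedFDeriv ℝ p.2 (g y) v‖) ≤ S * (A⁻¹ * I) := by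
    rw [hSdef, Finset.sum_mul]
    apply Finset.sum_le_sum
    intro p hp
    have hp1 : p.1 = 0 := by
      have := (Finset.mem_product.mp hp).1
      simpa [Nat.lt_one_iff] using Finset.mem_range.mp this
    have : (∫ v, ‖v‖ ^ p.1 * ‖iteratedFDeriv ℝ p.2 (g y) v‖)
        = ∫ v, ‖iteratedFDeriv ℝ p.2 (g y) v‖ := by
      rw [hp1]; simp
    rw [this]
    calc (∫ v, ‖iteratedFDeriv ℝ p.2 (g y) v‖) ≤ (Cn p.2 * A⁻¹) * I := hJ p.2 y
      _ = Cn p.2 * (A⁻¹ * I) := by ring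
  have hB2 : ‖η‖ ^ N * ‖𝓕 (g y) η‖ ≤ (2^N * (S * I)) * A⁻¹ := by
    calc ‖η‖ ^ N * ‖𝓕 (g y) η‖
        ≤ (2:ℝ)^N * ∑ p ∈ Finset.range (0+1) ×ˢ Finset.range (N+1),
            ∫ v, ‖v‖ ^ p.1 * ‖iteratedFDeriv ℝ p.2 (g y) v‖ := by
          convert hpow using 2 <;> norm_num
      _ ≤ (2:ℝ)^N * (S * (A⁻¹ * I)) :=
          mul_le_mul_of_nonneg_left hsumle (by positivity)
      _ = (2^N * (S * I)) * A⁻¹ := by ring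
  have hB1 : ‖𝓕 (g y) η‖ ≤ (Cn 0 * I) * A⁻¹ := by
    have hle : ‖𝓕 (g y) η‖ ≤ ∫ v, ‖g y v‖ :=
      VectorFourier.norm_fourierIntegral_le_integral_norm _ _ _ _ _
    have he : (∫ v, ‖g y v‖) = ∫ v, ‖iteratedFDeriv ℝ 0 (g y) v‖ := by
      congr 1; funext v; rw [norm_iteratedFDeriv_zero]
    calc ‖𝓕 (g y) η‖ ≤ ∫ v, ‖g y v‖ := hle
      _ = ∫ v, ‖iteratedFDeriv ℝ 0 (g y) v‖ := he
      _ ≤ (Cn 0 * A⁻¹) * I := hJ 0 y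
      _ = (Cn 0 * I) * A⁻¹ := by ring
  have hjbη : jb η ^ N ≤ 2^N * (1 + ‖η‖^N) := by
    rcases le_total ‖η‖ 1 with h | h
    · have h1 : jb η ≤ 2 := by
        have := jb_le_one_add η; linarith
      calc jb η ^ N ≤ 2 ^ N := pow_le_pow_left₀ (jb_nonneg η) h1 N
        _ ≤ 2^N * (1 + ‖η‖^N) := by
            nlinarith [pow_nonneg (norm_nonneg η) N, pow_pos (show (0:ℝ) < 2 by norm_num) N]
    · have h1 : jb η ≤ 2 * ‖η‖ := by
        have := jb_le_one_add η; linarith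
      calc jb η ^ N ≤ (2 * ‖η‖) ^ N := pow_le_pow_left₀ (jb_nonneg η) h1 N
        _ = 2^N * ‖η‖^N := mul_pow 2 ‖η‖ N
        _ ≤ 2^N * (1 + ‖η‖^N) := by
            nlinarith [pow_pos (show (0:ℝ) < 2 by norm_num) N]
  calc jb y ^ N * (jb η ^ N * ‖gaborT χ f y η‖)
      ≤ A * ((2^N * (1 + ‖η‖^N)) * ‖𝓕 (g y) η‖) := by
        rw [hFT]
        exact mul_le_mul_of_nonneg_left
          (mul_le_mul_of_nonneg_right hjbη (norm_nonneg _)) hA.le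
    _ = 2^N * (A * ‖𝓕 (g y) η‖
          + A * (‖η‖^N * ‖𝓕 (g y) η‖)) := by ring
    _ ≤ 2^N * (A * ((Cn 0 * I) * A⁻¹) + A * ((2^N * (S * I)) * A⁻¹)) := by
        apply mul_le_mul_of_nonneg_left
          (add_le_add (mul_le_mul_of_nonneg_left hB1 hA.le)
            (mul_le_mul_of_nonneg_left hB2 hA.le)) (by positivity)
    _ = 2^N * (Cn 0 * I + 2^N * (S * I)) := by
        field_simp

/-! ### Continuity of the Gabor transform -/

lemma norm_exp_two_pi (r : ℝ) : ‖Complex.exp (2 * Real.pi * Complex.I * (r:ℂ))‖ = 1 := by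
  rw [show 2 * (Real.pi:ℂ) * Complex.I * (r:ℂ) = ((2 * Real.pi * r : ℝ) : ℂ) * Complex.I by
    push_cast; ring]
  exact Complex.norm_exp_ofReal_mul_I _

lemma continuous_gaborT (χ f : SchwartzMap (EuclideanSpace ℝ (Fin d)) ℂ) :
    Continuous fun p : EuclideanSpace ℝ (Fin d) × EuclideanSpace ℝ (Fin d) =>
      gaborT χ f p.1 p.2 := by
  unfold gaborT
  refine continuous_of_dominated (F := fun (p : EuclideanSpace ℝ (Fin d) × EuclideanSpace ℝ (Fin d))
      (x : EuclideanSpace ℝ (Fin d)) => f x * (starRingEnd ℂ)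
        (χ (x - p.1) * Complex.exp (2 * Real.pi * Complex.I * ((inner ℝ p.2 x : ℝ) : ℂ))))
    (bound := fun x => ‖f x‖ * SchwartzMap.seminorm ℝ 0 0 χ) ?_ ?_ ?_ ?_
  · intro p
    apply Continuous.aestronglyMeasurable
    apply f.continuous.mul
    apply Complex.continuous_conj.comp
    apply Continuous.mul
    · exact χ.continuous.comp (continuous_id.sub continuous_const)
    · apply Complex.continuous_exp.comp
      apply continuous_const.mul
      exact Complex.continuous_ofReal.comp (Continuous.inner continuous_const continuous_id)
  · intro p
    filter_upwards with x
    rw [norm_mul, RCLike.norm_conj, norm_mul, norm_exp_two_pi, mul_one]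
    exact mul_le_mul_of_nonneg_left (χ.norm_le_seminorm ℝ _) (norm_nonneg _)
  · exact (f.integrable.norm).mul_const _
  · filter_upwards with x
    apply continuous_const.mul
    apply Complex.continuous_conj.comp
    apply Continuous.mul
    · exact χ.continuous.comp (continuous_const.sub continuous_fst)
    · apply Complex.continuous_exp.comp
      apply continuous_const.mul
      exact Complex.continuous_ofReal.comp (Continuous.inner continuous_snd continuous_const)

/-! ### Norm identity for wave packets -/

lemma wavePacket_norm (χ : SchwartzMap (EuclideanSpace ℝ (Fin d)) ℂ)
    (y₀ η₀ y η : EuclideanSpace ℝ (Fin d)) :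
    ‖∫ x : EuclideanSpace ℝ (Fin d),
        (χ (x - y₀) * Complex.exp (2 * Real.pi * Complex.I * ((inner ℝ η₀ x : ℝ) : ℂ))) *
          (starRingEnd ℂ) (χ (x - y) *
            Complex.exp (2 * Real.pi * Complex.I * ((inner ℝ η x : ℝ) : ℂ)))‖
      = ‖gaborT χ χ (y - y₀) (η - η₀)‖ := by
  set F : EuclideanSpace ℝ (Fin d) → ℂ := fun x =>
    (χ (x - y₀) * Complex.exp (2 * Real.pi * Complex.I * ((inner ℝ η₀ x : ℝ) : ℂ))) *
      (starRingEnd ℂ) (χ (x - y) *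
        Complex.exp (2 * Real.pi * Complex.I * ((inner ℝ η x : ℝ) : ℂ))) with hFdef
  set c : ℂ := Complex.exp (2 * Real.pi * Complex.I *
    (((inner ℝ η₀ y₀ : ℝ) - (inner ℝ η y₀ : ℝ) : ℝ) : ℂ)) with hcdef
  have h1 : ∀ u : EuclideanSpace ℝ (Fin d), F (u + y₀) = c *
      (χ u * (starRingEnd ℂ) (χ (u - (y - y₀)) *
        Complex.exp (2 * Real.pi * Complex.I * ((inner ℝ (η - η₀) u : ℝ) : ℂ)))) := by
    intro u
    rw [hFdef]
    simp only
    have e1 : u + y₀ - y₀ = u := by abel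
    have e2 : u + y₀ - y = u - (y - y₀) := by abel
    rw [e1, e2]
    have conj2 : ∀ r : ℝ, (starRingEnd ℂ)
        (2 * Real.pi * Complex.I * (r:ℂ)) = -(2 * Real.pi * Complex.I * (r:ℂ)) := by
      intro r
      simp only [map_mul, Complex.conj_I, Complex.conj_ofReal, map_ofNat]
      ring
    rw [map_mul, map_mul, ← Complex.exp_conj, ← Complex.exp_conj, conj2, conj2]
    have hexp : Complex.exp (2 * Real.pi * Complex.I * ((inner ℝ η₀ (u + y₀) : ℝ) : ℂ)) *
        Complex.exp (-(2 * Real.pi * Complex.I * ((inner ℝ η (u + y₀) : ℝ) : ℂ)))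
        = c * Complex.exp (-(2 * Real.pi * Complex.I * ((inner ℝ (η - η₀) u : ℝ) : ℂ))) := by
      rw [hcdef, ← Complex.exp_add, ← Complex.exp_add]
      congr 1
      have r1 : (inner ℝ η₀ (u + y₀) : ℝ) = (inner ℝ η₀ u : ℝ) + (inner ℝ η₀ y₀ : ℝ) :=
        inner_add_right η₀ u y₀
      have r2 : (inner ℝ η (u + y₀) : ℝ) = (inner ℝ η u : ℝ) + (inner ℝ η y₀ : ℝ) :=
        inner_add_right η u y₀
      have r3 : (inner ℝ (η - η₀) u : ℝ) = (inner ℝ η u : ℝ) - (inner ℝ η₀ u : ℝ) :=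
        inner_sub_left η η₀ u
      rw [r1, r2, r3]
      push_cast
      ring
    calc (χ u * Complex.exp (2 * Real.pi * Complex.I * ((inner ℝ η₀ (u + y₀) : ℝ) : ℂ))) *
          ((starRingEnd ℂ) (χ (u - (y - y₀))) *
            Complex.exp (-(2 * Real.pi * Complex.I * ((inner ℝ η (u + y₀) : ℝ) : ℂ))))
        = (Complex.exp (2 * Real.pi * Complex.I * ((inner ℝ η₀ (u + y₀) : ℝ) : ℂ)) *
            Complex.exp (-(2 * Real.pi * Complex.I * ((inner ℝ η (u + y₀) : ℝ) : ℂ)))) *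
          (χ u * (starRingEnd ℂ) (χ (u - (y - y₀)))) := by ring
      _ = (c * Complex.exp (-(2 * Real.pi * Complex.I * ((inner ℝ (η - η₀) u : ℝ) : ℂ)))) *
          (χ u * (starRingEnd ℂ) (χ (u - (y - y₀)))) := by rw [hexp]
      _ = c * (χ u * ((starRingEnd ℂ) (χ (u - (y - y₀))) *
          Complex.exp (-(2 * Real.pi * Complex.I * ((inner ℝ (η - η₀) u : ℝ) : ℂ))))) := by ring
  have h0 : (∫ x, F x) = ∫ x, F (x + y₀) := (integral_add_right_eq_self F y₀).symm
  have hgab : gaborT χ χ (y - y₀) (η - η₀) = ∫ u, χ u * (starRingEnd ℂ)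
      (χ (u - (y - y₀)) *
        Complex.exp (2 * Real.pi * Complex.I * ((inner ℝ (η - η₀) u : ℝ) : ℂ))) := rfl
  calc ‖∫ x, F x‖ = ‖∫ x, F (x + y₀)‖ := by rw [h0]
    _ = ‖c * ∫ u, χ u * (starRingEnd ℂ) (χ (u - (y - y₀)) *
          Complex.exp (2 * Real.pi * Complex.I * ((inner ℝ (η - η₀) u : ℝ) : ℂ)))‖ := by
        rw [show (fun x => F (x + y₀)) = fun u => c *
            (χ u * (starRingEnd ℂ) (χ (u - (y - y₀)) *
              Complex.exp (2 * Real.pi * Complex.I * ((inner ℝ (η - η₀) u : ℝ) : ℂ))))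
          from funext h1, integral_const_mul]
    _ = ‖gaborT χ χ (y - y₀) (η - η₀)‖ := by
        rw [norm_mul, hcdef, norm_exp_two_pi, one_mul, hgab]

/-! ### Weighted bounds -/

lemma weight_bound {s : ℝ} {N : ℕ} (h : (d:ℝ) + 1 + |s| ≤ N)
    (x : EuclideanSpace ℝ (Fin d)) :
    (jb x ^ N)⁻¹ * jb x ^ (-s) ≤ jb x ^ (-((d:ℝ)+1)) := by
  rw [← jb_rpow_natCast_inv, ← Real.rpow_add (jb_pos x)]
  apply jb_rpow_le_of_exponent_le
  have := neg_le_abs s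
  linarith

lemma gaborT_le_inv {χ f : SchwartzMap (EuclideanSpace ℝ (Fin d)) ℂ} {N : ℕ} {C : ℝ}
    (hC : ∀ y η : EuclideanSpace ℝ (Fin d), jb y ^ N * (jb η ^ N * ‖gaborT χ f y η‖) ≤ C)
    (y η : EuclideanSpace ℝ (Fin d)) :
    ‖gaborT χ f y η‖ ≤ C * (jb y ^ N)⁻¹ * (jb η ^ N)⁻¹ := by
  have hA : (0:ℝ) < jb y ^ N := pow_pos (jb_pos y) N
  have hB : (0:ℝ) < jb η ^ N := pow_pos (jb_pos η) N
  have h3 : ‖gaborT χ f y η‖ * (jb y ^ N * jb η ^ N) ≤ C := by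
    calc ‖gaborT χ f y η‖ * (jb y ^ N * jb η ^ N)
        = jb y ^ N * (jb η ^ N * ‖gaborT χ f y η‖) := by ring
      _ ≤ C := hC y η
  calc ‖gaborT χ f y η‖ ≤ C / (jb y ^ N * jb η ^ N) := (le_div_iff₀ (mul_pos hA hB)).mpr h3
    _ = C * (jb y ^ N)⁻¹ * (jb η ^ N)⁻¹ := by rw [div_eq_mul_inv, mul_inv]; ring

lemma hNs (s : ℝ) : (d:ℝ) + 1 + |s| ≤ (d + 1 + ⌈|s|⌉₊ : ℕ) := by
  push_cast
  have := Nat.le_ceil |s|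
  linarith

end GaborAux

open GaborAux in
/-- For any `s`, the `S^{-s}` norm `∫∫ |Tf(y,η)| ⟨y⟩^{-s} ⟨η⟩^{-s} dy dη` of a Schwartz
function is finite, and the wave packet `χ_{y₀,η₀}` has `S^{-s}` norm
`≤ C(s) ⟨y₀⟩^{-s} ⟨η₀⟩^{-s}`. -/
theorem gabor_norm_finite_and_wave_packet_bound (d : ℕ) (s : ℝ)
    (χ : SchwartzMap (EuclideanSpace ℝ (Fin d)) ℂ)
    (hχ : ∫ x : EuclideanSpace ℝ (Fin d), ‖χ x‖ ^ 2 = 1) :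
    (∀ f : SchwartzMap (EuclideanSpace ℝ (Fin d)) ℂ,
      Integrable (fun p : EuclideanSpace ℝ (Fin d) × EuclideanSpace ℝ (Fin d) =>
        ‖gaborT χ f p.1 p.2‖ * jb p.1 ^ (-s) * jb p.2 ^ (-s))) ∧
    ∃ C > (0 : ℝ), ∀ y₀ η₀ : EuclideanSpace ℝ (Fin d),
      (∫ p : EuclideanSpace ℝ (Fin d) × EuclideanSpace ℝ (Fin d),
        ‖∫ x : EuclideanSpace ℝ (Fin d),
            (χ (x - y₀) * Complex.exp (2 * Real.pi * Complex.I * ((inner ℝ η₀ x : ℝ) : ℂ))) *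
            (starRingEnd ℂ) (χ (x - p.1) *
              Complex.exp (2 * Real.pi * Complex.I * ((inner ℝ p.2 x : ℝ) : ℂ)))‖ *
          jb p.1 ^ (-s) * jb p.2 ^ (-s)) ≤ C * jb y₀ ^ (-s) * jb η₀ ^ (-s) := by
  have hdlt : (d:ℝ) < (d:ℝ) + 1 := by linarith
  have hint1 : Integrable (fun x : EuclideanSpace ℝ (Fin d) => jb x ^ (-((d:ℝ)+1))) := by
    have := integrable_jb_rpow (d := d) (t := (d:ℝ)+1) hdlt
    simpa using this
  haveI hADD : (volume : Measure (EuclideanSpace ℝ (Fin d) ×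
      EuclideanSpace ℝ (Fin d))).IsAddRightInvariant := by
    rw [MeasureTheory.Measure.volume_eq_prod]
    exact Measure.prod.instIsAddRightInvariant
  constructor
  · -- Part 1: integrability for any Schwartz f
    intro f
    obtain ⟨C, hC0, hC⟩ := gaborT_decay χ f (d + 1 + ⌈|s|⌉₊)
    set N : ℕ := d + 1 + ⌈|s|⌉₊ with hNdef
    have hprod : Integrable (fun p : EuclideanSpace ℝ (Fin d) × EuclideanSpace ℝ (Fin d) =>
        (C * jb p.1 ^ (-((d:ℝ)+1))) * jb p.2 ^ (-((d:ℝ)+1))) := by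
      have h := (hint1.const_mul C).mul_prod hint1
      rwa [← MeasureTheory.Measure.volume_eq_prod] at h
    refine hprod.mono' ?_ ?_
    · apply Continuous.aestronglyMeasurable
      apply Continuous.mul
      apply Continuous.mul
      · exact (continuous_gaborT χ f).norm
      · exact (continuous_jb.comp continuous_fst).rpow_const
          (fun p => Or.inl (jb_pos p.1).ne')
      · exact (continuous_jb.comp continuous_snd).rpow_const
          (fun p => Or.inl (jb_pos p.2).ne')
    · filter_upwards with p
      have hnn : 0 ≤ ‖gaborT χ f p.1 p.2‖ * jb p.1 ^ (-s) * jb p.2 ^ (-s) :=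
        mul_nonneg (mul_nonneg (norm_nonneg _) (Real.rpow_nonneg (jb_nonneg _) _))
          (Real.rpow_nonneg (jb_nonneg _) _)
      rw [Real.norm_eq_abs, abs_of_nonneg hnn]
      have h1 : ‖gaborT χ f p.1 p.2‖ ≤ C * (jb p.1 ^ N)⁻¹ * (jb p.2 ^ N)⁻¹ :=
        gaborT_le_inv hC p.1 p.2
      have hw1 : (jb p.1 ^ N)⁻¹ * jb p.1 ^ (-s) ≤ jb p.1 ^ (-((d:ℝ)+1)) :=
        weight_bound (hNs s) p.1
      have hw2 : (jb p.2 ^ N)⁻¹ * jb p.2 ^ (-s) ≤ jb p.2 ^ (-((d:ℝ)+1)) :=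
        weight_bound (hNs s) p.2
      have hr1 : (0:ℝ) ≤ jb p.1 ^ (-s) := Real.rpow_nonneg (jb_nonneg _) _
      have hr2 : (0:ℝ) ≤ jb p.2 ^ (-s) := Real.rpow_nonneg (jb_nonneg _) _
      calc ‖gaborT χ f p.1 p.2‖ * jb p.1 ^ (-s) * jb p.2 ^ (-s)
          ≤ (C * (jb p.1 ^ N)⁻¹ * (jb p.2 ^ N)⁻¹) * jb p.1 ^ (-s) * jb p.2 ^ (-s) := by
            apply mul_le_mul_of_nonneg_right (mul_le_mul_of_nonneg_right h1 hr1) hr2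
        _ = C * ((jb p.1 ^ N)⁻¹ * jb p.1 ^ (-s)) * ((jb p.2 ^ N)⁻¹ * jb p.2 ^ (-s)) := by
            ring
        _ ≤ C * jb p.1 ^ (-((d:ℝ)+1)) * jb p.2 ^ (-((d:ℝ)+1)) := by
            apply mul_le_mul
            · exact mul_le_mul_of_nonneg_left hw1 hC0
            · exact hw2
            · exact mul_nonneg (inv_nonneg.mpr (pow_nonneg (jb_nonneg _) _)) hr2
            · exact mul_nonneg hC0 (Real.rpow_nonneg (jb_nonneg _) _)
        _ = (C * jb p.1 ^ (-((d:ℝ)+1))) * jb p.2 ^ (-((d:ℝ)+1)) := by ring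
  · -- Part 2: the wave packet bound
    obtain ⟨C1, hC10, hC1⟩ := gaborT_decay χ χ (d + 1 + ⌈|s|⌉₊)
    set N : ℕ := d + 1 + ⌈|s|⌉₊ with hNdef
    set Φ : EuclideanSpace ℝ (Fin d) × EuclideanSpace ℝ (Fin d) → ℝ := fun q =>
      ‖gaborT χ χ q.1 q.2‖ * ((4 * jb q.1) ^ |s| * (4 * jb q.2) ^ |s|) with hΦdef
    have hΦ0 : ∀ q, 0 ≤ Φ q := fun q =>
      mul_nonneg (norm_nonneg _) (mul_nonneg (Real.rpow_nonneg (by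
        have := jb_nonneg q.1; linarith) _) (Real.rpow_nonneg (by
        have := jb_nonneg q.2; linarith) _))
    have hΦint : Integrable Φ := by
      have hprod : Integrable (fun p : EuclideanSpace ℝ (Fin d) × EuclideanSpace ℝ (Fin d) =>
          ((C1 * (4:ℝ) ^ |s| * (4:ℝ) ^ |s|) * jb p.1 ^ (-((d:ℝ)+1))) *
            jb p.2 ^ (-((d:ℝ)+1))) := by
        have h := (hint1.const_mul (C1 * (4:ℝ) ^ |s| * (4:ℝ) ^ |s|)).mul_prod hint1
        rwa [← MeasureTheory.Measure.volume_eq_prod] at h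
      refine hprod.mono' ?_ ?_
      · apply Continuous.aestronglyMeasurable
        apply Continuous.mul
        · exact (continuous_gaborT χ χ).norm
        · apply Continuous.mul
          · exact (continuous_const.mul (continuous_jb.comp continuous_fst)).rpow_const
              (fun p => Or.inr (abs_nonneg s))
          · exact (continuous_const.mul (continuous_jb.comp continuous_snd)).rpow_const
              (fun p => Or.inr (abs_nonneg s))
      · filter_upwards with q
        rw [Real.norm_eq_abs, abs_of_nonneg (hΦ0 q)]
        have h1 : ‖gaborT χ χ q.1 q.2‖ ≤ C1 * (jb q.1 ^ N)⁻¹ * (jb q.2 ^ N)⁻¹ :=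
          gaborT_le_inv hC1 q.1 q.2
        have habs : ∀ x : EuclideanSpace ℝ (Fin d),
            (jb x ^ N)⁻¹ * jb x ^ |s| ≤ jb x ^ (-((d:ℝ)+1)) := by
          intro x
          have := weight_bound (s := -|s|) (N := N) (by rw [abs_neg, abs_abs]; exact hNs s) x
          rwa [neg_neg] at this
        have hm : ∀ x : EuclideanSpace ℝ (Fin d),
            (4 * jb x) ^ |s| = (4:ℝ) ^ |s| * jb x ^ |s| :=
          fun x => Real.mul_rpow (by norm_num) (jb_nonneg x)
        calc Φ q = ‖gaborT χ χ q.1 q.2‖ *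
              (((4:ℝ) ^ |s| * jb q.1 ^ |s|) * ((4:ℝ) ^ |s| * jb q.2 ^ |s|)) := by
              rw [hΦdef]; simp only; rw [hm q.1, hm q.2]
          _ ≤ (C1 * (jb q.1 ^ N)⁻¹ * (jb q.2 ^ N)⁻¹) *
              (((4:ℝ) ^ |s| * jb q.1 ^ |s|) * ((4:ℝ) ^ |s| * jb q.2 ^ |s|)) := by
              apply mul_le_mul_of_nonneg_right h1
              apply mul_nonneg <;>
                exact mul_nonneg (Real.rpow_nonneg (by norm_num) _)
                  (Real.rpow_nonneg (jb_nonneg _) _)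
          _ = (C1 * (4:ℝ) ^ |s| * (4:ℝ) ^ |s|) *
              (((jb q.1 ^ N)⁻¹ * jb q.1 ^ |s|) * ((jb q.2 ^ N)⁻¹ * jb q.2 ^ |s|)) := by
              ring
          _ ≤ (C1 * (4:ℝ) ^ |s| * (4:ℝ) ^ |s|) *
              (jb q.1 ^ (-((d:ℝ)+1)) * jb q.2 ^ (-((d:ℝ)+1))) := by
              apply mul_le_mul_of_nonneg_left
              · apply mul_le_mul (habs q.1) (habs q.2)
                · exact mul_nonneg (inv_nonneg.mpr (pow_nonneg (jb_nonneg _) _))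
                    (Real.rpow_nonneg (jb_nonneg _) _)
                · exact Real.rpow_nonneg (jb_nonneg _) _
              · exact mul_nonneg (mul_nonneg hC10 (Real.rpow_nonneg (by norm_num) _))
                  (Real.rpow_nonneg (by norm_num) _)
          _ = ((C1 * (4:ℝ) ^ |s| * (4:ℝ) ^ |s|) * jb q.1 ^ (-((d:ℝ)+1))) *
              jb q.2 ^ (-((d:ℝ)+1)) := by ring
    have hΦI : 0 ≤ ∫ q, Φ q := integral_nonneg hΦ0
    refine ⟨(∫ q, Φ q) + 1, by linarith, fun y₀ η₀ => ?_⟩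
    have hw1 : (0:ℝ) ≤ jb y₀ ^ (-s) := Real.rpow_nonneg (jb_nonneg _) _
    have hw2 : (0:ℝ) ≤ jb η₀ ^ (-s) := Real.rpow_nonneg (jb_nonneg _) _
    have hstep1 : (∫ p : EuclideanSpace ℝ (Fin d) × EuclideanSpace ℝ (Fin d),
        ‖∫ x : EuclideanSpace ℝ (Fin d),
            (χ (x - y₀) * Complex.exp (2 * Real.pi * Complex.I * ((inner ℝ η₀ x : ℝ) : ℂ))) *
            (starRingEnd ℂ) (χ (x - p.1) *
              Complex.exp (2 * Real.pi * Complex.I * ((inner ℝ p.2 x : ℝ) : ℂ)))‖ *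
          jb p.1 ^ (-s) * jb p.2 ^ (-s))
        ≤ ∫ p : EuclideanSpace ℝ (Fin d) × EuclideanSpace ℝ (Fin d),
            Φ (p - (y₀, η₀)) * (jb y₀ ^ (-s) * jb η₀ ^ (-s)) := by
      apply integral_mono_of_nonneg
      · filter_upwards with p
        exact mul_nonneg (mul_nonneg (norm_nonneg _)
          (Real.rpow_nonneg (jb_nonneg _) _)) (Real.rpow_nonneg (jb_nonneg _) _)
      · exact (hΦint.comp_sub_right (y₀, η₀)).mul_const _
      · filter_upwards with p
        rw [wavePacket_norm χ y₀ η₀ p.1 p.2]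
        have hp1 : (p - (y₀, η₀)).1 = p.1 - y₀ := rfl
        have hp2 : (p - (y₀, η₀)).2 = p.2 - η₀ := rfl
        rw [hΦdef]
        simp only [hp1, hp2]
        have hpe1 : jb p.1 ^ (-s) ≤ (4 * jb (p.1 - y₀)) ^ |s| * jb y₀ ^ (-s) :=
          jb_rpow_peetre s p.1 y₀
        have hpe2 : jb p.2 ^ (-s) ≤ (4 * jb (p.2 - η₀)) ^ |s| * jb η₀ ^ (-s) :=
          jb_rpow_peetre s p.2 η₀
        have hg0 : (0:ℝ) ≤ ‖gaborT χ χ (p.1 - y₀) (p.2 - η₀)‖ := norm_nonneg _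
        have h40 : ∀ x : EuclideanSpace ℝ (Fin d), (0:ℝ) ≤ (4 * jb x) ^ |s| :=
          fun x => Real.rpow_nonneg (by have := jb_nonneg x; linarith) _
        calc ‖gaborT χ χ (p.1 - y₀) (p.2 - η₀)‖ * jb p.1 ^ (-s) * jb p.2 ^ (-s)
            ≤ ‖gaborT χ χ (p.1 - y₀) (p.2 - η₀)‖ *
                ((4 * jb (p.1 - y₀)) ^ |s| * jb y₀ ^ (-s)) *
                ((4 * jb (p.2 - η₀)) ^ |s| * jb η₀ ^ (-s)) := by
              apply mul_le_mul
              · exact mul_le_mul_of_nonneg_left hpe1 hg0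
              · exact hpe2
              · exact Real.rpow_nonneg (jb_nonneg _) _
              · exact mul_nonneg hg0 (mul_nonneg (h40 _) hw1)
          _ = (‖gaborT χ χ (p.1 - y₀) (p.2 - η₀)‖ *
                ((4 * jb (p.1 - y₀)) ^ |s| * (4 * jb (p.2 - η₀)) ^ |s|)) *
              (jb y₀ ^ (-s) * jb η₀ ^ (-s)) := by ring
    have hstep2 : (∫ p : EuclideanSpace ℝ (Fin d) × EuclideanSpace ℝ (Fin d),
        Φ (p - (y₀, η₀)) * (jb y₀ ^ (-s) * jb η₀ ^ (-s)))
        = (∫ q, Φ q) * (jb y₀ ^ (-s) * jb η₀ ^ (-s)) := by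
      rw [integral_mul_const, integral_sub_right_eq_self Φ (y₀, η₀)]
    calc (∫ p : EuclideanSpace ℝ (Fin d) × EuclideanSpace ℝ (Fin d),
        ‖∫ x : EuclideanSpace ℝ (Fin d),
            (χ (x - y₀) * Complex.exp (2 * Real.pi * Complex.I * ((inner ℝ η₀ x : ℝ) : ℂ))) *
            (starRingEnd ℂ) (χ (x - p.1) *
              Complex.exp (2 * Real.pi * Complex.I * ((inner ℝ p.2 x : ℝ) : ℂ)))‖ *
          jb p.1 ^ (-s) * jb p.2 ^ (-s))
        ≤ (∫ q, Φ q) * (jb y₀ ^ (-s) * jb η₀ ^ (-s)) := hstep2 ▸ hstep1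
      _ ≤ ((∫ q, Φ q) + 1) * (jb y₀ ^ (-s) * jb η₀ ^ (-s)) := by
          apply mul_le_mul_of_nonneg_right (by linarith) (mul_nonneg hw1 hw2)
      _ = ((∫ q, Φ q) + 1) * jb y₀ ^ (-s) * jb η₀ ^ (-s) := by ring
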